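/- arXiv:1106.6037 — 3 statements merged into one kernel-verified Lean document; each statement's English description precedes it below -/
import Mathlib

section
/- Let σ ≥ 1 and n ≥ 1. Consider a walk on the torus (ZMod n) × (ZMod n) defined by p 0 = q₀ and p (k+1) = p k + d (f^[k] s₀), where f : Fin σ → Fin σ and d : Fin σ → (ZMod n) × (ZMod n). Then the set of points visited by the walk, {p k : k ∈ ℕ}, has cardinality at most σ·(n+1). -/
theorem stmt_5 (σ n : ℕ) (hσ : 1 ≤ σ) (hn : 1 ≤ n)
    (f : Fin σ → Fin σ) (d : Fin σ → ZMod n × ZMod n) (s₀ : Fin σ)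
    (q₀ : ZMod n × ZMod n) (p : ℕ → ZMod n × ZMod n) (hp0 : p 0 = q₀)
    (hstep : ∀ k, p (k + 1) = p k + d (f^[k] s₀)) :
    (Set.range p).Finite ∧ (Set.range p).ncard ≤ σ * (n + 1) := by
  -- pigeonhole: two equal states among the first σ+1
  obtain ⟨a, b, hab, heq⟩ : ∃ a b : Fin (σ+1), a ≠ b ∧ f^[(a:ℕ)] s₀ = f^[(b:ℕ)] s₀ := by
    obtain ⟨a, b, h1, h2⟩ := Fintype.exists_ne_map_eq_of_card_lt
      (fun k : Fin (σ+1) => f^[(k:ℕ)] s₀) (by simp)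
    exact ⟨a, b, h1, h2⟩
  -- normalize to i < j
  obtain ⟨i, j, hij, hjσ, hiter⟩ : ∃ i j : ℕ, i < j ∧ j ≤ σ ∧ f^[i] s₀ = f^[j] s₀ := by
    rcases lt_or_gt_of_ne hab with h | h
    · exact ⟨a, b, h, by omega, heq⟩
    · exact ⟨b, a, h, by omega, heq.symm⟩
  set t : ℕ := j - i with htdef
  have ht : 0 < t := by omega
  have hper : ∀ k, f^[i + k + t] s₀ = f^[i + k] s₀ := by
    intro k
    have h1 : i + k + t = k + j := by omega
    have h2 : i + k = k + i := by omega
    rw [h1, h2, Function.iterate_add_apply, Function.iterate_add_apply, hiter]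
  set v : ZMod n × ZMod n := p (i + t) - p i with hvdef
  have hconst : ∀ k, p (i + k + t) = p (i + k) + v := by
    intro k
    induction k with
    | zero => simp [hvdef]
    | succ k ih =>
      have e1 : i + (k+1) + t = (i + k + t) + 1 := by omega
      have e2 : i + (k+1) = (i + k) + 1 := by omega
      rw [e1, e2, hstep, hstep, ih, hper k]
      abel
  have hmul : ∀ k m, p (i + k + m * t) = p (i + k) + m • v := by
    intro k m
    induction m with
    | zero => simp
    | succ m ih =>
      have e : i + k + (m+1) * t = i + (k + m * t) + t := by ring
      rw [e, hconst, show i + (k + m * t) = i + k + m * t from by omega, ih,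
        succ_nsmul]
      abel
  have hv : n • v = 0 := by
    ext
    · show n • v.1 = (0 : ZMod n)
      rw [nsmul_eq_mul, ZMod.natCast_self, zero_mul]
    · show n • v.2 = (0 : ZMod n)
      rw [nsmul_eq_mul, ZMod.natCast_self, zero_mul]
  set N : ℕ := i + n * t with hNdef
  have key : ∀ k, ∃ k' < N, p k' = p k := by
    intro k
    by_cases hk : k < N
    · exact ⟨k, hk, rfl⟩
    · push_neg at hk
      have hki : i ≤ k := by
        have : n * t ≥ 1 := Nat.one_le_iff_ne_zero.mpr (by positivity)
        omega
      set r : ℕ := (k - i) % t with hrdef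
      set q : ℕ := (k - i) / t with hqdef
      have hr : r < t := Nat.mod_lt _ ht
      have hkeq : k = i + r + q * t := by
        have h := Nat.div_add_mod (k - i) t
        rw [← hqdef, ← hrdef] at h
        have h' : q * t = t * q := Nat.mul_comm _ _
        omega
      have hqsmul : q • v = (q % n) • v := by
        have hq : q = n * (q / n) + q % n := (Nat.div_add_mod q n).symm
        calc q • v = (n * (q / n)) • v + (q % n) • v := by
              rw [← add_nsmul, ← hq]
          _ = (q % n) • v := by
              rw [mul_comm, mul_smul, hv, smul_zero, zero_add]
      refine ⟨i + r + (q % n) * t, ?_, ?_⟩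
      · have h1 : q % n < n := Nat.mod_lt _ (by omega)
        have h2 : (q % n) * t ≤ (n - 1) * t := Nat.mul_le_mul_right _ (by omega)
        have h3 : (n - 1) * t + t = n * t := by
          obtain ⟨m, hm⟩ : ∃ m, n = m + 1 := ⟨n - 1, by omega⟩
          rw [hm, Nat.add_sub_cancel]; ring
        omega
      · rw [hmul, hkeq, hmul, hqsmul]
  have hsub : Set.range p ⊆ p '' ↑(Finset.range N) := by
    rintro x ⟨k, rfl⟩
    obtain ⟨k', hk', hpk⟩ := key k
    exact ⟨k', by simpa using hk', hpk⟩
  have hfin1 : (p '' ↑(Finset.range N)).Finite := ((Finset.range N).finite_toSet).image p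
  constructor
  · exact hfin1.subset hsub
  · have h1 : (Set.range p).ncard ≤ (p '' ↑(Finset.range N)).ncard :=
      Set.ncard_le_ncard hsub hfin1
    have h2 : (p '' ↑(Finset.range N)).ncard ≤ (↑(Finset.range N) : Set ℕ).ncard :=
      Set.ncard_image_le ((Finset.range N).finite_toSet)
    have h3 : (↑(Finset.range N) : Set ℕ).ncard = N := by
      rw [Set.ncard_coe_finset, Finset.card_range]
    have h4 : N ≤ σ * (n + 1) := by
      have ht' : t ≤ σ := by omega
      have : n * t ≤ n * σ := Nat.mul_le_mul_left _ ht'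
      have hexp : σ * (n + 1) = n * σ + σ := by ring
      omega
    omega
end

section
/- Let n, m ≥ 3 and let b be a vertex of the torus (ZMod n) × (ZMod m). Define West(v) = v − (0,1) and North(v) = v − (1,0). If the set of token-marked nodes is exactly S = {West(b), North(b)}, then b is the unique vertex v such that both West(v) ∈ S and North(v) ∈ S. -/
lemma aux_two_ne (k : ℕ) (hk : 3 ≤ k) : (2 : ZMod k) ≠ 0 := by
  intro h
  have h2 : ((2 : ℕ) : ZMod k) = 0 := by exact_mod_cast h
  have h3 := Nat.le_of_dvd (by norm_num) ((ZMod.natCast_eq_zero_iff 2 k).mp h2)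
  omega

lemma aux_one_ne (k : ℕ) (hk : 3 ≤ k) : (1 : ZMod k) ≠ 0 := by
  intro h
  have h2 : ((1 : ℕ) : ZMod k) = 0 := by exact_mod_cast h
  have h3 := Nat.le_of_dvd (by norm_num) ((ZMod.natCast_eq_zero_iff 1 k).mp h2)
  omega

theorem stmt_10 (n m : ℕ) (hn : 3 ≤ n) (hm : 3 ≤ m) (b : ZMod n × ZMod m) :
    ∀ v : ZMod n × ZMod m,
      (v - (0, 1) ∈ ({b - (0, 1), b - (1, 0)} : Set (ZMod n × ZMod m)) ∧
       v - (1, 0) ∈ ({b - (0, 1), b - (1, 0)} : Set (ZMod n × ZMod m))) ↔ v = b := by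
  intro v
  constructor
  · intro ⟨h1, h2⟩
    simp only [Set.mem_insert_iff, Set.mem_singleton_iff] at h1 h2
    rcases h1 with h1 | h1 <;> rcases h2 with h2 | h2
    · exact sub_left_injective h1
    · exact sub_left_injective h1
    · -- v = b - (1,0) + (0,1), and v - (1,0) = b - (0,1)
      have hv : v = b - (1, 0) + (0, 1) := by
        linear_combination h1
      rw [hv] at h2
      have e1 := congrArg Prod.fst h2
      have e2 := congrArg Prod.snd h2
      simp only [Prod.fst_sub, Prod.snd_sub, Prod.fst_add, Prod.snd_add] at e1 e2
      exfalso
      apply aux_two_ne n hn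
      linear_combination -e1
    · have hv : v = b - (1, 0) + (0, 1) := by
        linear_combination h1
      rw [hv] at h2
      have e2 := congrArg Prod.snd h2
      simp only [Prod.snd_sub, Prod.snd_add] at e2
      exfalso
      apply aux_one_ne m hm
      linear_combination e2
  · rintro rfl
    exact ⟨Or.inl rfl, Or.inr rfl⟩
end

section
/- Let N ≥ 1 and let H ⊆ ZMod N with |H| = k ≥ 1. For a walker starting at h₀ ∈ H and moving by +1 each step, if after some number T of steps the walker has encountered members of H exactly q·k times for a positive integer q, and T is the least such time, then T = q·N and the walker is back at h₀. -/
theorem stmt_13 (N : ℕ) (hN : 1 ≤ N) (H : Finset (ZMod N)) (k : ℕ) (hk : 1 ≤ k)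
    (hH : H.card = k) (h₀ : ZMod N) (hh₀ : h₀ ∈ H) (q : ℕ) (hq : 0 < q) (T : ℕ)
    (hT : IsLeast {T : ℕ |
        ((Finset.Icc 1 T).filter (fun t : ℕ => h₀ + (t : ZMod N) ∈ H)).card = q * k} T) :
    T = q * N ∧ h₀ + (T : ZMod N) = h₀ := by
  haveI : NeZero N := ⟨by omega⟩
  set P : ℕ → Prop := fun t : ℕ => h₀ + (t : ZMod N) ∈ H with hP
  have block : ∀ a : ℕ,
      ((Finset.Ico a (a+N)).filter (fun t : ℕ => h₀ + (t : ZMod N) ∈ H)).card = k := by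
    intro a
    rw [← hH]
    refine Finset.card_bij' (fun t _ => h₀ + (t : ZMod N))
      (fun x _ => a + (x - (h₀ + (a : ZMod N))).val) ?_ ?_ ?_ ?_
    · intro t ht
      simp only [Finset.mem_filter] at ht
      exact ht.2
    · intro x hx
      simp only [Finset.mem_filter, Finset.mem_Ico]
      have hv := ZMod.val_lt (x - (h₀ + (a : ZMod N)))
      refine ⟨⟨by omega, by omega⟩, ?_⟩
      push_cast
      rw [ZMod.natCast_val, ZMod.cast_id]
      have : h₀ + ((a : ZMod N) + (x - (h₀ + (a : ZMod N)))) = x := by ring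
      rw [this] ; exact hx
    · intro t ht
      simp only [Finset.mem_filter, Finset.mem_Ico] at ht
      have h1 : (h₀ + (t : ZMod N)) - (h₀ + (a : ZMod N)) = ((t - a : ℕ) : ZMod N) := by
        rw [Nat.cast_sub ht.1.1]
        ring
      show a + ((h₀ + (t : ZMod N)) - (h₀ + (a : ZMod N))).val = t
      rw [h1, ZMod.val_natCast_of_lt (by omega)]
      omega
    · intro x hx
      show h₀ + ((a + (x - (h₀ + (a : ZMod N))).val : ℕ) : ZMod N) = x
      push_cast
      rw [ZMod.natCast_val, ZMod.cast_id]
      ring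
  have count : ∀ m : ℕ,
      ((Finset.Icc 1 (m*N)).filter (fun t : ℕ => h₀ + (t : ZMod N) ∈ H)).card = m * k := by
    intro m
    induction m with
    | zero => simp
    | succ m ih =>
      have hu : Finset.Icc 1 ((m+1)*N) =
          Finset.Icc 1 (m*N) ∪ Finset.Ico (m*N+1) (m*N+1+N) := by
        ext x
        simp only [Finset.mem_Icc, Finset.mem_Ico, Finset.mem_union]
        have : (m+1)*N = m*N + N := by ring
        omega
      have hdisj : Disjoint (Finset.Icc 1 (m*N)) (Finset.Ico (m*N+1) (m*N+1+N)) := by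
        rw [Finset.disjoint_left]
        intro x hx hx'
        simp only [Finset.mem_Icc] at hx
        simp only [Finset.mem_Ico] at hx'
        omega
      rw [hu, Finset.filter_union,
        Finset.card_union_of_disjoint (Finset.disjoint_filter_filter hdisj),
        ih, block (m*N+1)]
      ring
  have hitqN : h₀ + ((q*N : ℕ) : ZMod N) = h₀ := by
    push_cast
    simp [ZMod.natCast_self]
  have prev : ((Finset.Icc 1 (q*N - 1)).filter (fun t : ℕ => h₀ + (t : ZMod N) ∈ H)).card
      = q*k - 1 := by
    have hqN : 1 ≤ q*N := Nat.one_le_iff_ne_zero.mpr (by positivity)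
    have hins : Finset.Icc 1 (q*N) = insert (q*N) (Finset.Icc 1 (q*N-1)) := by
      ext x
      simp only [Finset.mem_Icc, Finset.mem_insert]
      omega
    have hnm : q*N ∉ Finset.Icc 1 (q*N-1) := by
      simp only [Finset.mem_Icc]
      omega
    have := count q
    rw [hins, Finset.filter_insert, if_pos (by rw [hitqN]; exact hh₀),
      Finset.card_insert_of_notMem (fun h => hnm (Finset.mem_filter.mp h).1)] at this
    omega
  have hTle : T ≤ q*N := hT.2 (count q)
  have hTge : ¬ T < q*N := by
    intro hlt
    have hsub : (Finset.Icc 1 T).filter (fun t : ℕ => h₀ + (t : ZMod N) ∈ H) ⊆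
        (Finset.Icc 1 (q*N-1)).filter (fun t : ℕ => h₀ + (t : ZMod N) ∈ H) := by
      apply Finset.filter_subset_filter
      apply Finset.Icc_subset_Icc_right
      omega
    have := Finset.card_le_card hsub
    rw [hT.1, prev] at this
    have : 1 ≤ q*k := Nat.one_le_iff_ne_zero.mpr (by positivity)
    omega
  have hTeq : T = q*N := by omega
  exact ⟨hTeq, by rw [hTeq]; exact hitqN⟩
end
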